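/- With $Y_{tu} = e^{-k(u-t)}$ and $X^{(0)}_u(x) = Y_{tu}x + m(1-Y_{tu})$ for $x, k, m > 0$, define $Z^{(0,1)}_u(x') = -\frac{\mu^2 c}{2\gamma k} \frac{1 - e^{-k(T-u)}}{\sqrt{x'}\,(e^{-k(T-u)}x' + m(1-e^{-k(T-u)}))}$. Then the leading contribution to $V^{(1)}$, namely $-\mu\rho \int_t^T \frac{Z^{(0,1)}_u(X^{(0)}_u(x))}{\sqrt{X^{(0)}_u(x)}}\, du$ evaluated along the deterministic zeroth-order flow, equals $-\frac{\rho\mu^3 c}{2\gamma k^2}\left\{\frac{1-Y_{tT}}{m X^{(0)}_T(x)} + \frac{1}{m^2}\ln\left(\frac{Y_{tT}x}{X^{(0)}_T(x)}\right)\right\}$. -/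

import Mathlib

open Real

/-- The leading contribution to `V^{(1)}`: with
`Z^{(0,1)}_u(x') = -(μ²c/(2γk)) (1-e^{-k(T-u)}) / (√x' (e^{-k(T-u)}x' + m(1-e^{-k(T-u)})))`,
the deterministic integral `-μρ ∫ₜ^T Z^{(0,1)}_u(X⁰_u(x)) / √(X⁰_u(x)) du` along the
zeroth-order flow `X⁰_u(x) = Y_{tu}x + m(1-Y_{tu})` equals
`-(ρμ³c/(2γk²)) { (1-Y_{tT})/(m X⁰_T(x)) + (1/m²) log (Y_{tT}x / X⁰_T(x)) }`. -/
theorem stmt_18 (μ ρ γ k m c x t T : ℝ) (hγ : 0 < γ) (hk : 0 < k) (hm : 0 < m) (hc : 0 < c)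
    (hx : 0 < x) (hρ : ρ ∈ Set.Ioo (-1 : ℝ) 1) (htT : t < T)
    (X0 : ℝ → ℝ)
    (hX0 : ∀ u, X0 u = Real.exp (-k * (u - t)) * x + m * (1 - Real.exp (-k * (u - t))))
    (Z01 : ℝ → ℝ → ℝ)
    (hZ01 : ∀ u x', Z01 u x' = -(μ ^ 2 * c / (2 * γ * k)) *
        ((1 - Real.exp (-k * (T - u))) /
          (Real.sqrt x' *
            (Real.exp (-k * (T - u)) * x' + m * (1 - Real.exp (-k * (T - u))))))) :
    -(μ * ρ) * (∫ u in t..T, Z01 u (X0 u) / Real.sqrt (X0 u))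
      = -(ρ * μ ^ 3 * c / (2 * γ * k ^ 2)) *
          ((1 - Real.exp (-k * (T - t))) / (m * X0 T)
            + 1 / m ^ 2 * Real.log (Real.exp (-k * (T - t)) * x / X0 T)) := by
  simp only [neg_mul] at hX0 hZ01 ⊢
  have hXpos : ∀ u ∈ Set.uIcc t T, 0 < X0 u := by
    intro u hu
    rw [Set.uIcc_of_le htT.le] at hu
    have h1 : Real.exp (-(k * (u - t))) ≤ 1 := by
      rw [Real.exp_le_one_iff]
      nlinarith [hu.1]
    have h2 : 0 < Real.exp (-(k * (u - t))) := Real.exp_pos _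
    rw [hX0]
    nlinarith
  have hXT : 0 < X0 T := hXpos T Set.right_mem_uIcc
  have hXt : X0 t = x := by simp [hX0]
  have hXcont : Continuous X0 := by
    rw [show X0 = fun u => Real.exp (-(k * (u - t))) * x + m * (1 - Real.exp (-(k * (u - t))))
      from funext hX0]
    fun_prop
  have hflow : ∀ u, Real.exp (-(k * (T - u))) * X0 u
      + m * (1 - Real.exp (-(k * (T - u)))) = X0 T := by
    intro u
    have h : Real.exp (-(k * (T - u))) * Real.exp (-(k * (u - t)))
        = Real.exp (-(k * (T - t))) := by
      rw [← Real.exp_add]; ring_nf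
    rw [hX0, hX0]
    linear_combination (x - m) * h
  set f : ℝ → ℝ := fun u => -(μ ^ 2 * c / (2 * γ * k))
      * (1 / (m * X0 u) - Real.exp (-(k * (T - u))) / (m * X0 T)) with hf
  have heq : Set.EqOn (fun u => Z01 u (X0 u) / Real.sqrt (X0 u)) f (Set.uIcc t T) := by
    intro u hu
    have hXu := hXpos u hu
    have hs : Real.sqrt (X0 u) * Real.sqrt (X0 u) = X0 u := Real.mul_self_sqrt hXu.le
    have hsne : Real.sqrt (X0 u) ≠ 0 := by positivity
    have hfl := hflow u
    simp only [hZ01, hf]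
    generalize hg1 : Real.exp (-(k * (T - u))) = e1 at hfl ⊢
    generalize hg2 : Real.sqrt (X0 u) = s at hs hsne ⊢
    generalize hg3 : X0 u = Xu at hs hfl hXu ⊢
    generalize hg4 : X0 T = XT at hfl hXT ⊢
    rw [hfl]
    have h1 : 1 - e1 = (XT - e1 * Xu) / m := by
      field_simp
      linear_combination hfl
    have h2 : 1 / (m * Xu) - e1 / (m * XT) = (XT - e1 * Xu) / (m * Xu * XT) := by
      field_simp
    rw [h1, h2, ← hs]
    field_simp
  set F : ℝ → ℝ := fun u => -(μ ^ 2 * c / (2 * γ * k))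
      * ((1 / m ^ 2) * (u + (1 / k) * Real.log (X0 u))
      - Real.exp (-(k * (T - u))) / (k * m * X0 T)) with hFdef
  have hF : ∀ u ∈ Set.uIcc t T, HasDerivAt F (f u) u := by
    intro u hu
    have hXu := hXpos u hu
    have hE : HasDerivAt (fun u => Real.exp (-(k * (u - t))))
        (Real.exp (-(k * (u - t))) * (-k)) u := by
      have h1 : HasDerivAt (fun u : ℝ => -(k * (u - t))) (-k) u := by
        have h := (((hasDerivAt_id' u).sub_const t).const_mul k).neg
        rw [mul_one] at h
        exact h
      exact h1.exp
    have hX : HasDerivAt X0 (Real.exp (-(k * (u - t))) * (-k) * (x - m)) u := by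
      have hXfun : X0 = fun u => Real.exp (-(k * (u - t))) * x
          + m * (1 - Real.exp (-(k * (u - t)))) := funext hX0
      rw [hXfun]
      have h := (hE.mul_const x).add (((hasDerivAt_const u (1:ℝ)).sub hE).const_mul m)
      exact h.congr_deriv (by ring)
    have hlog : HasDerivAt (fun u => Real.log (X0 u))
        (Real.exp (-(k * (u - t))) * (-k) * (x - m) / X0 u) u := hX.log hXu.ne'
    have hE2 : HasDerivAt (fun u => Real.exp (-(k * (T - u))))
        (Real.exp (-(k * (T - u))) * k) u := by
      have h1 : HasDerivAt (fun u : ℝ => -(k * (T - u))) k u := by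
        have h := (((hasDerivAt_const u T).sub (hasDerivAt_id' u)).const_mul k).neg
        rw [show -(k * (0 - 1)) = k by ring] at h
        exact h
      exact h1.exp
    have hD : HasDerivAt F (-(μ ^ 2 * c / (2 * γ * k)) * ((1 / m ^ 2) * (1 + (1 / k) *
        (Real.exp (-(k * (u - t))) * (-k) * (x - m) / X0 u))
        - Real.exp (-(k * (T - u))) * k / (k * m * X0 T))) u :=
      ((((hasDerivAt_id u).add (hlog.const_mul (1/k))).const_mul
        (1 / m ^ 2)).sub (hE2.div_const (k * m * X0 T))).const_mul _
    convert hD using 1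
    have hXu' : X0 u = Real.exp (-(k * (u - t))) * (x - m) + m := by rw [hX0]; ring
    simp only [hf]
    generalize hg0 : Real.exp (-(k * (u - t))) = e0 at hXu' ⊢
    generalize hg1 : Real.exp (-(k * (T - u))) = e1
    generalize hg3 : X0 u = Xu at hXu' hXu ⊢
    generalize hg4 : X0 T = XT at hXT ⊢
    rw [hXu'] at hXu ⊢
    field_simp
    ring
  have hcont : ContinuousOn f (Set.uIcc t T) := by
    apply ContinuousOn.mul continuousOn_const
    apply ContinuousOn.sub
    · exact continuousOn_const.div
        ((continuous_const.mul hXcont).continuousOn) (fun u hu => by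
          have := hXpos u hu; positivity)
    · exact Continuous.continuousOn (by fun_prop)
  have hint : IntervalIntegrable f MeasureTheory.volume t T := hcont.intervalIntegrable
  have hI : (∫ u in t..T, Z01 u (X0 u) / Real.sqrt (X0 u)) = F T - F t := by
    rw [intervalIntegral.integral_congr heq]
    exact intervalIntegral.integral_eq_sub_of_hasDerivAt hF hint
  rw [hI]
  have hlogdiv : Real.log (Real.exp (-(k * (T - t))) * x / X0 T)
      = -(k * (T - t)) + Real.log x - Real.log (X0 T) := by
    rw [Real.log_div (by positivity) hXT.ne', Real.log_mul (Real.exp_ne_zero _) hx.ne',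
      Real.log_exp]
  have hTT : Real.exp (-(k * (T - T))) = 1 := by
    rw [sub_self, mul_zero, neg_zero, Real.exp_zero]
  rw [hlogdiv, hFdef]
  simp only
  rw [hXt, hTT]
  generalize hgE : Real.exp (-(k * (T - t))) = E
  generalize hgL1 : Real.log (X0 T) = L1
  generalize hgL2 : Real.log x = L2
  generalize hg4 : X0 T = XT at hXT ⊢
  field_simp
  ring
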